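/- For every positive integer m, ∫_{0}^{π} (sin(mu/2)/sin(u/2))^4 du = π·(2m³ + m)/3. -/

import Mathlib

open MeasureTheory Real Finset intervalIntegral


private lemma jk_sin_sq_sub (x y : ℝ) :
    Real.sin x ^ 2 - Real.sin y ^ 2 = Real.sin (x + y) * Real.sin (x - y) := by
  rw [Real.sin_add, Real.sin_sub]
  nlinarith [Real.sin_sq_add_cos_sq x, Real.sin_sq_add_cos_sq y]

/-- Dirichlet kernel identity. -/
private lemma jk_dirichlet (n : ℕ) (u : ℝ) :
    Real.sin (u / 2) * (1 + 2 * ∑ k ∈ Finset.range n, Real.cos ((k + 1) * u))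
      = Real.sin (((n : ℝ) + 1 / 2) * u) := by
  induction n with
  | zero => simp; ring_nf
  | succ n ih =>
    rw [Finset.sum_range_succ]
    have h := Real.sin_sub_sin (((n : ℝ) + 1 + 1 / 2) * u) (((n : ℝ) + 1 / 2) * u)
    have h1 : (((n : ℝ) + 1 + 1 / 2) * u - ((n : ℝ) + 1 / 2) * u) / 2 = u / 2 := by ring
    have h2 : (((n : ℝ) + 1 + 1 / 2) * u + ((n : ℝ) + 1 / 2) * u) / 2 = ((n : ℝ) + 1) * u := by
      ring
    rw [h1, h2] at h
    push_cast
    nlinarith [ih]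

private noncomputable def jkPoly (m : ℕ) (u : ℝ) : ℝ :=
  (m : ℝ) + 2 * ∑ k ∈ Finset.range m, ((m : ℝ) - (k + 1)) * Real.cos ((k + 1) * u)

/-- Fejér kernel identity. -/
private lemma jk_fejer (m : ℕ) (u : ℝ) :
    Real.sin (m * u / 2) ^ 2 = Real.sin (u / 2) ^ 2 * jkPoly m u := by
  induction m with
  | zero => simp [jkPoly]
  | succ m ih =>
    have hA := jk_sin_sq_sub (((m : ℝ) + 1) * u / 2) ((m : ℝ) * u / 2)
    have e1 : ((m : ℝ) + 1) * u / 2 + (m : ℝ) * u / 2 = ((m : ℝ) + 1 / 2) * u := by ring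
    have e2 : ((m : ℝ) + 1) * u / 2 - (m : ℝ) * u / 2 = u / 2 := by ring
    rw [e1, e2] at hA
    have hD := jk_dirichlet m u
    have hP : jkPoly (m + 1) u
        = jkPoly m u + (1 + 2 * ∑ k ∈ Finset.range m, Real.cos ((k + 1) * u)) := by
      unfold jkPoly
      rw [Finset.sum_range_succ]
      push_cast
      have hs : ∑ k ∈ Finset.range m, ((m : ℝ) + 1 - ((k : ℝ) + 1)) * Real.cos (((k : ℝ) + 1) * u)
          = ∑ k ∈ Finset.range m, (((m : ℝ) - ((k : ℝ) + 1)) * Real.cos (((k : ℝ) + 1) * u)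
            + Real.cos (((k : ℝ) + 1) * u)) := by
        apply Finset.sum_congr rfl; intro k _; ring
      rw [hs, Finset.sum_add_distrib]
      ring
    push_cast
    push_cast at ih hA
    rw [hP]
    linear_combination hA + ih - Real.sin (u / 2) * hD

private lemma jk_integral_cos_int (c : ℤ) (hc : c ≠ 0) :
    ∫ u in (0:ℝ)..Real.pi, Real.cos ((c : ℝ) * u) = 0 := by
  have hc' : (c : ℝ) ≠ 0 := Int.cast_ne_zero.mpr hc
  rw [intervalIntegral.integral_comp_mul_left Real.cos hc']
  simp [integral_cos, Real.sin_int_mul_pi]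

private lemma jk_ii (c : ℝ) : IntervalIntegrable (fun u => Real.cos (c * u))
    MeasureTheory.volume 0 Real.pi :=
  (Real.continuous_cos.comp (continuous_const.mul continuous_id)).intervalIntegrable _ _

private lemma jk_orth (k j : ℕ) :
    ∫ u in (0:ℝ)..Real.pi, Real.cos ((k + 1) * u) * Real.cos ((j + 1) * u)
      = if k = j then Real.pi / 2 else 0 := by
  have hpt : ∀ u : ℝ, Real.cos (((k : ℝ) + 1) * u) * Real.cos (((j : ℝ) + 1) * u)
      = (Real.cos (((k : ℝ) - j) * u) + Real.cos (((k : ℝ) + j + 2) * u)) / 2 := by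
    intro u
    have h1 := Real.cos_sub (((k : ℝ) + 1) * u) (((j : ℝ) + 1) * u)
    have h2 := Real.cos_add (((k : ℝ) + 1) * u) (((j : ℝ) + 1) * u)
    have e1 : ((k : ℝ) + 1) * u - ((j : ℝ) + 1) * u = ((k : ℝ) - j) * u := by ring
    have e2 : ((k : ℝ) + 1) * u + ((j : ℝ) + 1) * u = ((k : ℝ) + j + 2) * u := by ring
    rw [e1] at h1; rw [e2] at h2
    linarith
  simp only [hpt]
  rw [intervalIntegral.integral_div, intervalIntegral.integral_add (jk_ii _) (jk_ii _)]
  have h2 : ∫ u in (0:ℝ)..Real.pi, Real.cos (((k : ℝ) + j + 2) * u) = 0 := by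
    have : ((k : ℝ) + j + 2) = (((k : ℤ) + j + 2 : ℤ) : ℝ) := by push_cast; ring
    rw [this]
    exact jk_integral_cos_int _ (by omega)
  rw [h2]
  by_cases hkj : k = j
  · subst hkj
    simp [sub_self]
  · have : ((k : ℝ) - j) = (((k : ℤ) - j : ℤ) : ℝ) := by push_cast; ring
    rw [this, jk_integral_cos_int _ (by omega)]
    simp [hkj]

private lemma jk_sum_sq (m : ℕ) :
    ∑ k ∈ Finset.range m, ((m : ℝ) - (k + 1)) ^ 2
      = (m : ℝ) * (m - 1) * (2 * m - 1) / 6 := by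
  induction m with
  | zero => simp
  | succ m ih =>
    rw [Finset.sum_range_succ']
    push_cast
    have hs : ∑ k ∈ Finset.range m, ((m : ℝ) + 1 - ((k : ℝ) + 1 + 1)) ^ 2
        = ∑ k ∈ Finset.range m, ((m : ℝ) - ((k : ℝ) + 1)) ^ 2 := by
      apply Finset.sum_congr rfl; intro k _; ring
    rw [hs, ih]
    ring

private lemma jk_cont (c : ℝ) : Continuous fun u : ℝ => Real.cos (c * u) :=
  Real.continuous_cos.comp (continuous_const.mul continuous_id)

/-- Integral of the Fejér polynomial squared. -/
private lemma jk_integral_poly_sq (m : ℕ) :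
    ∫ u in (0:ℝ)..Real.pi, (jkPoly m u) ^ 2 = Real.pi * (2 * (m : ℝ) ^ 3 + m) / 3 := by
  have hpt : ∀ u : ℝ, (jkPoly m u) ^ 2
      = ((m : ℝ) ^ 2
        + (∑ k ∈ Finset.range m, 4 * (m : ℝ) * ((m : ℝ) - (k + 1)) * Real.cos ((k + 1) * u)))
        + (∑ k ∈ Finset.range m, ∑ j ∈ Finset.range m,
            4 * ((m : ℝ) - (k + 1)) * ((m : ℝ) - (j + 1))
              * (Real.cos ((k + 1) * u) * Real.cos ((j + 1) * u))) := by
    intro u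
    unfold jkPoly
    have e1 : ∑ k ∈ Finset.range m, 4 * (m : ℝ) * ((m : ℝ) - (k + 1)) * Real.cos ((k + 1) * u)
        = 4 * (m : ℝ) * ∑ k ∈ Finset.range m, ((m : ℝ) - (k + 1)) * Real.cos ((k + 1) * u) := by
      rw [Finset.mul_sum]
      exact Finset.sum_congr rfl fun k _ => by ring
    have e2 : ∑ k ∈ Finset.range m, ∑ j ∈ Finset.range m,
          4 * ((m : ℝ) - (k + 1)) * ((m : ℝ) - (j + 1))
            * (Real.cos ((k + 1) * u) * Real.cos ((j + 1) * u))
        = 4 * (∑ k ∈ Finset.range m, ((m : ℝ) - (k + 1)) * Real.cos ((k + 1) * u)) ^ 2 := by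
      rw [sq, Finset.sum_mul_sum, Finset.mul_sum]
      refine Finset.sum_congr rfl fun k _ => ?_
      rw [Finset.mul_sum]
      exact Finset.sum_congr rfl fun j _ => by ring
    rw [e1, e2]
    ring
  have ii1 : IntervalIntegrable (fun u : ℝ =>
      ∑ k ∈ Finset.range m, 4 * (m : ℝ) * ((m : ℝ) - (k + 1)) * Real.cos ((k + 1) * u))
      MeasureTheory.volume 0 Real.pi :=
    (continuous_finset_sum _ fun k _ => continuous_const.mul (jk_cont _)).intervalIntegrable _ _
  have ii2 : IntervalIntegrable (fun u : ℝ =>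
      ∑ k ∈ Finset.range m, ∑ j ∈ Finset.range m,
        4 * ((m : ℝ) - (k + 1)) * ((m : ℝ) - (j + 1))
          * (Real.cos ((k + 1) * u) * Real.cos ((j + 1) * u)))
      MeasureTheory.volume 0 Real.pi :=
    (continuous_finset_sum _ fun k _ => continuous_finset_sum _ fun j _ =>
      continuous_const.mul ((jk_cont _).mul (jk_cont _))).intervalIntegrable _ _
  simp only [hpt]
  rw [intervalIntegral.integral_add (intervalIntegrable_const.add ii1) ii2,
    intervalIntegral.integral_add intervalIntegrable_const ii1]
  have I0 : ∫ u in (0:ℝ)..Real.pi, ((m : ℝ) ^ 2) = Real.pi * m ^ 2 := by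
    simp [mul_comm]
  have I1 : ∫ u in (0:ℝ)..Real.pi,
      (∑ k ∈ Finset.range m, 4 * (m : ℝ) * ((m : ℝ) - (k + 1)) * Real.cos ((k + 1) * u)) = 0 := by
    rw [intervalIntegral.integral_finset_sum
      (f := fun (k : ℕ) (u : ℝ) => 4 * (m : ℝ) * ((m : ℝ) - (k + 1)) * Real.cos ((k + 1) * u))
      (fun k _ =>
      (continuous_const.mul (jk_cont _)).intervalIntegrable _ _)]
    apply Finset.sum_eq_zero
    intro k _
    rw [intervalIntegral.integral_const_mul]
    have : ((k : ℝ) + 1) = (((k : ℤ) + 1 : ℤ) : ℝ) := by push_cast; ring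
    rw [this, jk_integral_cos_int _ (by omega), mul_zero]
  have I2 : ∫ u in (0:ℝ)..Real.pi,
      (∑ k ∈ Finset.range m, ∑ j ∈ Finset.range m,
        4 * ((m : ℝ) - (k + 1)) * ((m : ℝ) - (j + 1))
          * (Real.cos ((k + 1) * u) * Real.cos ((j + 1) * u)))
      = 2 * Real.pi * ∑ k ∈ Finset.range m, ((m : ℝ) - (k + 1)) ^ 2 := by
    rw [intervalIntegral.integral_finset_sum
      (f := fun (k : ℕ) (u : ℝ) => ∑ j ∈ Finset.range m, 4 * ((m : ℝ) - (k + 1)) * ((m : ℝ) - (j + 1))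
        * (Real.cos ((k + 1) * u) * Real.cos ((j + 1) * u)))
      (fun k _ =>
      (continuous_finset_sum _ fun j _ =>
        continuous_const.mul ((jk_cont _).mul (jk_cont _))).intervalIntegrable _ _)]
    have hk : ∀ k ∈ Finset.range m,
        (∫ u in (0:ℝ)..Real.pi, ∑ j ∈ Finset.range m,
          4 * ((m : ℝ) - (k + 1)) * ((m : ℝ) - (j + 1))
            * (Real.cos ((k + 1) * u) * Real.cos ((j + 1) * u)))
        = 2 * Real.pi * ((m : ℝ) - (k + 1)) ^ 2 := by
      intro k hkm
      rw [intervalIntegral.integral_finset_sum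
        (f := fun (j : ℕ) (u : ℝ) => 4 * ((m : ℝ) - (k + 1)) * ((m : ℝ) - (j + 1))
          * (Real.cos ((k + 1) * u) * Real.cos ((j + 1) * u)))
        (fun j _ =>
        (continuous_const.mul ((jk_cont _).mul (jk_cont _))).intervalIntegrable _ _)]
      have hj : ∀ j ∈ Finset.range m,
          (∫ u in (0:ℝ)..Real.pi,
            4 * ((m : ℝ) - (k + 1)) * ((m : ℝ) - (j + 1))
              * (Real.cos ((k + 1) * u) * Real.cos ((j + 1) * u)))
          = if k = j then 2 * Real.pi * ((m : ℝ) - (k + 1)) ^ 2 else 0 := by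
        intro j _
        rw [intervalIntegral.integral_const_mul, jk_orth k j]
        by_cases h : k = j
        · subst h; simp; ring
        · simp [h]
      rw [Finset.sum_congr rfl hj, Finset.sum_ite_eq (Finset.range m) k
        (fun _ => 2 * Real.pi * ((m : ℝ) - (k + 1)) ^ 2)]
      simp [hkm]
    rw [Finset.sum_congr rfl hk, Finset.mul_sum]
  rw [I0, I1, I2, jk_sum_sq]
  ring

/-- **The mass of the Jackson kernel:**
`∫_0^π (sin(mu/2)/sin(u/2))^4 du = π·(2m³ + m)/3`.
(At `u = 0` the formula gives a junk value, but this measure-zero point does not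
affect the integral.) -/
theorem integral_jacksonKernel (m : ℕ) (hm : 0 < m) :
    ∫ u in (0 : ℝ)..Real.pi, (Real.sin (m * u / 2) / Real.sin (u / 2)) ^ 4
      = Real.pi * (2 * (m : ℝ) ^ 3 + m) / 3 := by
  rw [show (∫ u in (0 : ℝ)..Real.pi, (Real.sin (m * u / 2) / Real.sin (u / 2)) ^ 4)
      = ∫ u in (0 : ℝ)..Real.pi, (jkPoly m u) ^ 2 from ?_, jk_integral_poly_sq]
  apply intervalIntegral.integral_congr_ae
  filter_upwards with x hx
  rw [Set.uIoc_of_le Real.pi_pos.le] at hx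
  have hx1 : 0 < x / 2 := by linarith [hx.1]
  have hx2 : x / 2 < Real.pi := by linarith [hx.2, Real.pi_pos]
  have hs : Real.sin (x / 2) ≠ 0 := ne_of_gt (Real.sin_pos_of_pos_of_lt_pi hx1 hx2)
  have hf := jk_fejer m x
  have : (Real.sin (m * x / 2) / Real.sin (x / 2)) ^ 2 = jkPoly m x := by
    rw [div_pow, hf, mul_comm, mul_div_assoc, div_self (pow_ne_zero 2 hs), mul_one]
  calc (Real.sin (m * x / 2) / Real.sin (x / 2)) ^ 4
      = ((Real.sin (m * x / 2) / Real.sin (x / 2)) ^ 2) ^ 2 := by ring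
    _ = (jkPoly m x) ^ 2 := by rw [this]
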